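/- Tail bound for averages of variables with stretched-exponential tails (Claim 3.12). Let (Ω, ℱ, ℙ) be a probability space, N ≥ 1 an integer, and X₁, …, X_N : Ω → ℝ nonnegative measurable random variables (not necessarily independent). Let c₁, c₂, α > 0 and assume that ℙ(X_i ≥ t) ≤ c₁·exp(−c₂·t^α) for every 1 ≤ i ≤ N and every t > 0. Then there exist constants C, c > 0, depending only on c₁, c₂ and α (in particular not on N), such that ℙ( (1/N)·∑_{i=1}^N X_i ≥ t ) ≤ C·exp(−c·t^α) for every t > 0. -/

import Mathlib

open MeasureTheory ProbabilityTheory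

noncomputable section

/-- Vertices of the lattice `ℤ^d`. -/
abbrev Vert (d : ℕ) := Fin d → ℤ

/-- Points of `ℝ^n` with the Euclidean norm. -/
abbrev Pt (n : ℕ) := EuclideanSpace ℝ (Fin n)

/-- Nearest-neighbour adjacency on `ℤ^d`: `‖u - v‖₁ = 1`. -/
abbrev adj {d : ℕ} (u v : Vert d) : Prop := (∑ i, |u i - v i|) = 1

/-- The Dirichlet energy `‖∇φ‖²_Λ`: the sum of `‖φ_u - φ_v‖²` over unordered
nearest-neighbour edges `{u,v}` meeting `Λ`, each counted once (realized as half
the corresponding sum over ordered pairs). -/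
def dirEnergy {d n : ℕ} (Λ : Finset (Vert d)) (φ : Vert d → Pt n) : ℝ :=
  (1 / 2) * ∑ᶠ u : Vert d, ∑ᶠ v : Vert d,
    if adj u v ∧ (u ∈ Λ ∨ v ∈ Λ) then ‖φ u - φ v‖ ^ 2 else 0

/-- The finite-volume Hamiltonian `H^{η,Λ}(φ)`. -/
def hamiltonian {d n : ℕ} (η : Vert d → Pt n → ℝ) (Λ : Finset (Vert d))
    (φ : Vert d → Pt n) : ℝ :=
  (1 / 2) * dirEnergy Λ φ + ∑ v ∈ Λ, η v (φ v)

/-- The Laplacian `(Δ_Λ φ)_v := ∑_{u ∼ v, {u,v} ∩ Λ ≠ ∅} (φ_u - φ_v)`. -/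
def lap {d n : ℕ} (Λ : Finset (Vert d)) (φ : Vert d → Pt n) (v : Vert d) : Pt n :=
  ∑ᶠ u : Vert d, if adj u v ∧ (u ∈ Λ ∨ v ∈ Λ) then φ u - φ v else 0

/-- The pairing `(φ, ψ) := ∑_v φ_v ⬝ ψ_v` (for finitely supported `ψ`). -/
def pairing {d n : ℕ} (φ ψ : Vert d → Pt n) : ℝ :=
  ∑ᶠ v : Vert d, (inner ℝ (φ v) (ψ v) : ℝ)

/-- The shifted-and-recentered environment `η^s(v,t) := η(v, t - s_v) - η(v, -s_v)`. -/
def shiftEnv {d n : ℕ} (η : Vert d → Pt n → ℝ) (s : Vert d → Pt n) :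
    Vert d → Pt n → ℝ :=
  fun v t => η v (t - s v) - η v (-s v)

/-- The box `Λ_L = {-L, …, L}^d`. -/
def box (d : ℕ) (L : ℤ) : Finset (Vert d) :=
  Fintype.piFinset fun _ : Fin d => Finset.Icc (-L) L

/-- The fractional Brownian covariance `K(t,s) = (‖t‖^{2H} + ‖s‖^{2H} - ‖t-s‖^{2H})/2`. -/
def fbmCov (H : ℝ) {n : ℕ} (t s : Pt n) : ℝ :=
  (‖t‖ ^ (2 * H) + ‖s‖ ^ (2 * H) - ‖t - s‖ ^ (2 * H)) / 2

/-- A fractional Brownian disorder of Hurst parameter `H`. -/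
def IsFBMDisorder (d n : ℕ) (H : ℝ) {Ω : Type*} [MeasurableSpace Ω]
    (P : Measure Ω) (η : Ω → Vert d → Pt n → ℝ) : Prop :=
  (∀ v t, Measurable fun ω => η ω v t) ∧
  (∀ᵐ ω ∂P, ∀ v, Continuous (η ω v) ∧ η ω v 0 = 0) ∧
  iIndepFun
    (fun v ω => η ω v) P ∧
  ∀ (v : Vert d) (k : ℕ) (t : Fin k → Pt n) (c : Fin k → ℝ),
    P.map (fun ω => ∑ i, c i * η ω v (t i)) =
      gaussianReal 0 (Real.toNNReal (∑ i, ∑ j, c i * c j * fbmCov H (t i) (t j)))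

/-- A ground configuration (minimal surface) in a finite set `Λ` with zero
boundary values. -/
def IsGroundConfig {d n : ℕ} {Ω : Type*} [MeasurableSpace Ω] (P : Measure Ω)
    (η : Ω → Vert d → Pt n → ℝ) (Λ : Finset (Vert d)) (φ : Ω → Vert d → Pt n) : Prop :=
  Measurable φ ∧
  ∀ᵐ ω ∂P, (∀ v ∉ Λ, φ ω v = 0) ∧
    ∀ ψ : Vert d → Pt n, (∀ v ∉ Λ, ψ v = 0) →
      hamiltonian (η ω) Λ (φ ω) ≤ hamiltonian (η ω) Λ ψ

/-- The ground energy `GE^{η,Λ}`. -/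
def groundEnergy {d n : ℕ} {Ω : Type*} [MeasurableSpace Ω]
    (η : Ω → Vert d → Pt n → ℝ) (Λ : Finset (Vert d)) (φ : Ω → Vert d → Pt n)
    (ω : Ω) : ℝ :=
  hamiltonian (η ω) Λ (φ ω)



private lemma ptwise_bound (t : ℝ) (ht : 0 < t) (a : ℝ) :
    ∀ K : ℕ, a < 2 ^ K * t / 4 →
      a ≤ t / 4 + t / 4 * ∑ j ∈ Finset.range K,
          2 ^ j * (if 2 ^ j * t / 4 ≤ a then (1 : ℝ) else 0) := by
  intro K
  induction K with
  | zero =>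
    intro h
    simp only [pow_zero, one_mul] at h
    simp only [Finset.range_zero, Finset.sum_empty, mul_zero, add_zero]
    linarith
  | succ K ih =>
    intro h
    by_cases h' : a < 2 ^ K * t / 4
    · have h1 := ih h'
      have h2 : ∑ j ∈ Finset.range K, (2:ℝ) ^ j * (if 2 ^ j * t / 4 ≤ a then (1 : ℝ) else 0)
          ≤ ∑ j ∈ Finset.range (K + 1), (2:ℝ) ^ j * (if 2 ^ j * t / 4 ≤ a then (1 : ℝ) else 0) := by
        apply Finset.sum_le_sum_of_subset_of_nonneg
        · exact Finset.range_subset_range.mpr (Nat.le_succ K)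
        · intro j _ _
          exact mul_nonneg (by positivity) (by split_ifs <;> norm_num)
      have h3 : t / 4 * ∑ j ∈ Finset.range K, (2:ℝ) ^ j * (if 2 ^ j * t / 4 ≤ a then (1 : ℝ) else 0)
          ≤ t / 4 * ∑ j ∈ Finset.range (K + 1), (2:ℝ) ^ j * (if 2 ^ j * t / 4 ≤ a then (1 : ℝ) else 0) :=
        mul_le_mul_of_nonneg_left h2 (by linarith)
      linarith
    · push_neg at h'
      have hsum : ∑ j ∈ Finset.range (K + 1), (2:ℝ) ^ j * (if 2 ^ j * t / 4 ≤ a then (1 : ℝ) else 0)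
          = ∑ j ∈ Finset.range (K + 1), (2:ℝ) ^ j := by
        refine Finset.sum_congr rfl fun j hj => ?_
        have hjK : j ≤ K := Nat.lt_succ_iff.mp (Finset.mem_range.mp hj)
        have h2j : (2:ℝ) ^ j ≤ 2 ^ K := pow_le_pow_right₀ (by norm_num) hjK
        have : (2:ℝ) ^ j * t / 4 ≤ 2 ^ K * t / 4 := by
          have := mul_le_mul_of_nonneg_right h2j ht.le
          linarith
        rw [if_pos (le_trans this h'), mul_one]
      rw [hsum, geom_sum_eq (by norm_num : (2:ℝ) ≠ 1)]
      have hring : t / 4 + t / 4 * ((2 ^ (K + 1) - 1) / (2 - 1)) = 2 ^ (K + 1) * t / 4 := by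
        field_simp
        ring
      rw [hring]
      linarith


-- key term bound: c₁ * 4^k * exp(-(2^(kα) u)) ≤ (c₁ * exp(-u)) * (1/2)^k  when u ≥ 3/α
private lemma term_bound (c₁ α u : ℝ) (hc₁ : 0 < c₁) (hα : 0 < α) (hu : 3 / α ≤ u) (k : ℕ) :
    c₁ * 4 ^ k * Real.exp (-((2:ℝ) ^ ((k : ℝ) * α) * u)) ≤
      (c₁ * Real.exp (-u)) * (1 / 2) ^ k := by
  have hu0 : 0 < u := lt_of_lt_of_le (by positivity) hu
  have hlog2 : 0 < Real.log 2 := Real.log_pos (by norm_num)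
  -- 2^(kα) ≥ 1 + kα log 2
  have h1 : (k : ℝ) * α * Real.log 2 + 1 ≤ (2:ℝ) ^ ((k : ℝ) * α) := by
    rw [Real.rpow_def_of_pos (by norm_num : (0:ℝ) < 2)]
    have := Real.add_one_le_exp (Real.log 2 * ((k : ℝ) * α))
    linarith
  have hk0 : (0:ℝ) ≤ (k : ℝ) := Nat.cast_nonneg k
  -- (2^(kα) - 1) * u ≥ 3 k log 2
  have h2 : 3 * (k : ℝ) * Real.log 2 ≤ ((2:ℝ) ^ ((k : ℝ) * α) - 1) * u := by
    have hka : 0 ≤ (k : ℝ) * α * Real.log 2 := by positivity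
    have : (k : ℝ) * α * Real.log 2 * (3 / α) ≤ ((2:ℝ) ^ ((k : ℝ) * α) - 1) * u := by
      apply mul_le_mul (by linarith) hu (by positivity) (by linarith)
    calc 3 * (k : ℝ) * Real.log 2 = (k : ℝ) * α * Real.log 2 * (3 / α) := by
          field_simp
      _ ≤ _ := this
  -- 8^k ≤ exp((2^(kα) - 1) * u)
  have h8 : (8:ℝ) ^ k ≤ Real.exp (((2:ℝ) ^ ((k : ℝ) * α) - 1) * u) := by
    have : (8:ℝ) ^ k = Real.exp (3 * (k : ℝ) * Real.log 2) := by
      rw [show (3:ℝ) * k * Real.log 2 = (k : ℝ) * (3 * Real.log 2) by ring]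
      rw [show (3:ℝ) * Real.log 2 = Real.log 8 by
        rw [show (8:ℝ) = 2 ^ (3:ℕ) by norm_num, Real.log_pow]; push_cast; ring]
      rw [← Real.log_pow, Real.exp_log (by positivity)]
    rw [this]
    exact Real.exp_le_exp.mpr h2
  -- put together
  have hexp : Real.exp (-((2:ℝ) ^ ((k : ℝ) * α) * u))
      = Real.exp (-u) * Real.exp (-(((2:ℝ) ^ ((k : ℝ) * α) - 1) * u)) := by
    rw [← Real.exp_add]; ring_nf
  rw [hexp]
  have hE : Real.exp (-(((2:ℝ) ^ ((k : ℝ) * α) - 1) * u)) ≤ (1/8 : ℝ) ^ k := by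
    rw [Real.exp_neg]
    have h8pos : (0:ℝ) < 8 ^ k := by positivity
    have : ((8:ℝ) ^ k)⁻¹ ≤ (Real.exp (((2:ℝ) ^ ((k : ℝ) * α) - 1) * u))⁻¹ → True := fun _ => trivial
    have hinv := inv_anti₀ h8pos h8
    calc (Real.exp (((2:ℝ) ^ ((k : ℝ) * α) - 1) * u))⁻¹ ≤ ((8:ℝ) ^ k)⁻¹ := hinv
      _ = (1/8 : ℝ) ^ k := by rw [← inv_pow]; norm_num
  have hhalf : (4:ℝ) ^ k * ((1/8:ℝ)) ^ k = (1/2) ^ k := by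
    rw [← mul_pow]; norm_num
  calc c₁ * 4 ^ k * (Real.exp (-u) * Real.exp (-(((2:ℝ) ^ ((k : ℝ) * α) - 1) * u)))
      = (c₁ * Real.exp (-u)) * ((4:ℝ) ^ k * Real.exp (-(((2:ℝ) ^ ((k : ℝ) * α) - 1) * u))) := by ring
    _ ≤ (c₁ * Real.exp (-u)) * ((4:ℝ) ^ k * (1/8:ℝ) ^ k) := by
        apply mul_le_mul_of_nonneg_left _ (by positivity)
        exact mul_le_mul_of_nonneg_left hE (by positivity)
    _ = (c₁ * Real.exp (-u)) * (1/2) ^ k := by rw [hhalf]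


open ENNReal in
private lemma markov_count {Ω : Type*} [MeasurableSpace Ω] (P : Measure Ω)
    {N : ℕ} (X : Fin N → Ω → ℝ) (hX : ∀ i, Measurable (X i)) (s b : ℝ) (hb : 0 < b) :
    ENNReal.ofReal b * P {ω | b ≤ ∑ i, (if s ≤ X i ω then (1:ℝ) else 0)}
      ≤ ∑ i, P {ω | s ≤ X i ω} := by
  set B : Fin N → Set Ω := fun i => {ω | s ≤ X i ω} with hB
  have hBm : ∀ i, MeasurableSet (B i) := fun i => measurableSet_le measurable_const (hX i)
  set f : Ω → ℝ := fun ω => ∑ i, (if s ≤ X i ω then (1:ℝ) else 0) with hf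
  have hfm : Measurable f :=
    Finset.measurable_sum _ fun i _ => Measurable.ite (hBm i) measurable_const measurable_const
  set A : Set Ω := {ω | b ≤ f ω} with hA
  have hAm : MeasurableSet A := measurableSet_le measurable_const hfm
  set g : Ω → ℝ≥0∞ := fun ω => ∑ i, (B i).indicator (1 : Ω → ℝ≥0∞) ω with hg
  have hgm : Measurable g :=
    Finset.measurable_sum _ fun i _ => measurable_one.indicator (hBm i)
  have hfg : ∀ ω, g ω = ENNReal.ofReal (f ω) := by
    intro ω
    rw [hg, hf, ENNReal.ofReal_sum_of_nonneg (fun i _ => by split_ifs <;> norm_num)]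
    refine Finset.sum_congr rfl fun i _ => ?_
    rw [Set.indicator_apply]
    by_cases h : s ≤ X i ω
    · rw [if_pos, if_pos h]; · simp
      · exact h
    · rw [if_neg, if_neg h]; · simp
      · exact h
  have hsum : ∑ i, P (B i) = ∫⁻ ω, g ω ∂P := by
    simp only [hg]
    rw [lintegral_finset_sum _ (fun i _ => measurable_one.indicator (hBm i))]
    refine Finset.sum_congr rfl fun i _ => ?_
    exact (lintegral_indicator_one (hBm i)).symm
  calc ENNReal.ofReal b * P A = ∫⁻ _ω in A, ENNReal.ofReal b ∂P := by
        rw [setLIntegral_const]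
    _ ≤ ∫⁻ ω in A, g ω ∂P := by
        apply setLIntegral_mono hgm
        intro ω hω
        rw [hfg ω]
        exact ENNReal.ofReal_le_ofReal hω
    _ ≤ ∫⁻ ω, g ω ∂P := setLIntegral_le_lintegral _ _
    _ = ∑ i, P (B i) := hsum.symm


/-- **Tail bound for averages of variables with stretched-exponential tails**
(Claim 3.12). -/
theorem average_stretched_exponential_tail (c₁ c₂ α : ℝ)
    (hc₁ : 0 < c₁) (hc₂ : 0 < c₂) (hα : 0 < α) :
    ∃ C c : ℝ, 0 < C ∧ 0 < c ∧
      ∀ (Ω : Type*) [MeasurableSpace Ω] (P : Measure Ω) [IsProbabilityMeasure P]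
        (N : ℕ), 1 ≤ N → ∀ X : Fin N → Ω → ℝ,
        (∀ i, Measurable (X i)) → (∀ i ω, 0 ≤ X i ω) →
        (∀ i, ∀ t : ℝ, 0 < t →
          (P {ω | t ≤ X i ω}).toReal ≤ c₁ * Real.exp (-(c₂ * t ^ α))) →
        ∀ t : ℝ, 0 < t →
          (P {ω | t ≤ (1 / (N : ℝ)) * ∑ i, X i ω}).toReal ≤
            C * Real.exp (-(c * t ^ α)) := by
  have h4 : (0:ℝ) < (4:ℝ) ^ α := Real.rpow_pos_of_pos (by norm_num) α
  set c : ℝ := c₂ / 4 ^ α with hc_def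
  have hc : 0 < c := div_pos hc₂ h4
  have hr : (0:ℝ) < (3 / (α * c₂)) ^ (1/α) := Real.rpow_pos_of_pos (by positivity) _
  set t₀ : ℝ := 4 * (3 / (α * c₂)) ^ (1/α) with ht₀_def
  have ht₀ : 0 < t₀ := by positivity
  set C : ℝ := 2 * c₁ + Real.exp (c * t₀ ^ α) with hC_def
  have hCpos : 0 < C := by positivity
  refine ⟨C, c, hCpos, hc, ?_⟩
  intro Ω _ P _ N hN X hmeas hnn htail t ht
  have hNpos : (0:ℝ) < N := by exact_mod_cast hN
  have hexpC : Real.exp (c * t₀ ^ α) ≤ C := by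
    have : (0:ℝ) < 2 * c₁ := by positivity
    rw [hC_def]; linarith
  by_cases hcase : t < t₀
  · -- small t: use P ≤ 1
    have h1 : (P {ω | t ≤ 1 / (N:ℝ) * ∑ i, X i ω}).toReal ≤ 1 := by
      have hle := prob_le_one (μ := P) (s := {ω | t ≤ 1 / (N:ℝ) * ∑ i, X i ω})
      simpa using ENNReal.toReal_mono ENNReal.one_ne_top hle
    have htα : t ^ α ≤ t₀ ^ α := Real.rpow_le_rpow ht.le hcase.le hα.le
    have h2 : (1:ℝ) ≤ Real.exp (c * t₀ ^ α) * Real.exp (-(c * t ^ α)) := by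
      rw [← Real.exp_add]
      apply Real.one_le_exp
      nlinarith
    have h3 : Real.exp (c * t₀ ^ α) * Real.exp (-(c * t ^ α)) ≤ C * Real.exp (-(c * t ^ α)) :=
      mul_le_mul_of_nonneg_right hexpC (Real.exp_pos _).le
    exact le_trans h1 (le_trans h2 h3)
  · push_neg at hcase
    set u : ℝ := c * t ^ α with hu_def
    have htdiv : (t/4) ^ α = t ^ α / 4 ^ α := Real.div_rpow ht.le (by norm_num : (0:ℝ) ≤ 4) α
    have hueq : u = c₂ * (t/4) ^ α := by rw [hu_def, htdiv, hc_def]; ring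
    have hu3 : 3 / α ≤ u := by
      have h1 : (3 / (α * c₂)) ^ (1/α) ≤ t / 4 := by
        rw [ht₀_def] at hcase; linarith
      have h2 : ((3 / (α * c₂)) ^ (1/α)) ^ α ≤ (t/4) ^ α :=
        Real.rpow_le_rpow hr.le h1 hα.le
      have h3 : ((3 / (α * c₂)) ^ (1/α)) ^ α = 3 / (α * c₂) := by
        rw [← Real.rpow_mul (by positivity), one_div, inv_mul_cancel₀ hα.ne', Real.rpow_one]
      rw [h3] at h2
      rw [hueq]
      calc 3 / α = c₂ * (3 / (α * c₂)) := by field_simp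
        _ ≤ c₂ * (t/4) ^ α := mul_le_mul_of_nonneg_left h2 hc₂.le
    -- the dyadic events
    set A : ℕ → Set Ω :=
      fun k => {ω | (N:ℝ)/4^k ≤ ∑ i, (if 2^k * t / 4 ≤ X i ω then (1:ℝ) else 0)} with hA_def
    -- Step 1: inclusion
    have hincl : {ω | t ≤ 1 / (N:ℝ) * ∑ i, X i ω} ⊆ ⋃ k : ℕ, A k := by
      intro ω hω
      simp only [Set.mem_setOf_eq] at hω
      by_contra hAn
      simp only [Set.mem_iUnion, not_exists] at hAn
      have hA' : ∀ k : ℕ, (∑ i, if 2^k * t / 4 ≤ X i ω then (1:ℝ) else 0) < (N:ℝ)/4^k := by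
        intro k
        have hk := hAn k
        rw [hA_def] at hk
        simpa [Set.mem_setOf_eq, not_le] using hk
      obtain ⟨K, hK⟩ : ∃ K : ℕ, (N:ℝ) ≤ 4 ^ K := by
        refine ⟨N, ?_⟩
        calc (N:ℝ) ≤ 2 ^ N := by exact_mod_cast (Nat.lt_two_pow_self (n := N)).le
          _ ≤ 4 ^ N := pow_le_pow_left₀ (by norm_num) (by norm_num) N
      have hsmall : ∀ i, X i ω < 2 ^ K * t / 4 := by
        intro i
        by_contra hi
        push_neg at hi
        have h1 : (1:ℝ) ≤ ∑ j, if 2^K * t / 4 ≤ X j ω then (1:ℝ) else 0 := by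
          have hs := Finset.single_le_sum
            (f := fun j => if 2^K * t / 4 ≤ X j ω then (1:ℝ) else 0)
            (fun j _ => by split_ifs <;> norm_num) (Finset.mem_univ i)
          have hs' : (if 2^K * t / 4 ≤ X i ω then (1:ℝ) else 0)
              ≤ ∑ j, if 2^K * t / 4 ≤ X j ω then (1:ℝ) else 0 := hs
          rwa [if_pos hi] at hs'
        have h2 : (N:ℝ)/4^K ≤ 1 := by
          rw [div_le_one (by positivity)]; exact hK
        linarith [hA' K]
      have hXle : ∀ i : Fin N, X i ω ≤ t/4 + t/4 * ∑ j ∈ Finset.range K,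
          2^j * (if 2^j * t/4 ≤ X i ω then (1:ℝ) else 0) :=
        fun i => ptwise_bound t ht (X i ω) K (hsmall i)
      have hsum1 : ∑ i, X i ω ≤ (N:ℝ) * (t/4) + t/4 *
          ∑ j ∈ Finset.range K, 2^j * (∑ i, if 2^j * t/4 ≤ X i ω then (1:ℝ) else 0) := by
        calc ∑ i, X i ω ≤ ∑ i : Fin N, (t/4 + t/4 * ∑ j ∈ Finset.range K,
              2^j * (if 2^j * t/4 ≤ X i ω then (1:ℝ) else 0)) :=
            Finset.sum_le_sum fun i _ => hXle i
          _ = (N:ℝ) * (t/4) + t/4 * ∑ j ∈ Finset.range K,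
              2^j * (∑ i, if 2^j * t/4 ≤ X i ω then (1:ℝ) else 0) := by
            rw [Finset.sum_add_distrib, Finset.sum_const, Finset.card_univ, Fintype.card_fin,
              nsmul_eq_mul, ← Finset.mul_sum]
            congr 1
            congr 1
            rw [Finset.sum_comm]
            exact Finset.sum_congr rfl fun j _ => (Finset.mul_sum _ _ _).symm
      have hsum2 : ∑ j ∈ Finset.range K, (2:ℝ)^j * (∑ i, if 2^j * t/4 ≤ X i ω then (1:ℝ) else 0)
          ≤ ∑ j ∈ Finset.range K, (2:ℝ)^j * ((N:ℝ)/4^j) :=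
        Finset.sum_le_sum fun j _ => mul_le_mul_of_nonneg_left (hA' j).le (by positivity)
      have hsum3 : ∑ j ∈ Finset.range K, (2:ℝ)^j * ((N:ℝ)/4^j) ≤ 2 * (N:ℝ) := by
        have heq : ∀ j : ℕ, (2:ℝ)^j * ((N:ℝ)/4^j) = (N:ℝ) * (1/2)^j := by
          intro j
          rw [show ((4:ℝ))^j = 2^j * 2^j by rw [← mul_pow]; norm_num]
          have h2j : ((2:ℝ))^j ≠ 0 := by positivity
          field_simp
          rw [← mul_pow]; norm_num
        simp_rw [heq]
        rw [← Finset.mul_sum]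
        have hgeo : ∑ j ∈ Finset.range K, ((1:ℝ)/2)^j ≤ 2 := by
          rw [geom_sum_eq (by norm_num : (1:ℝ)/2 ≠ 1)]
          rw [div_le_iff_of_neg (by norm_num : ((1:ℝ)/2 - 1) < 0)]
          have : (0:ℝ) ≤ ((1:ℝ)/2)^K := by positivity
          linarith
        calc (N:ℝ) * ∑ j ∈ Finset.range K, ((1:ℝ)/2)^j ≤ (N:ℝ) * 2 :=
            mul_le_mul_of_nonneg_left hgeo hNpos.le
          _ = 2 * (N:ℝ) := by ring
      have hNt : (N:ℝ) * t ≤ ∑ i, X i ω := by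
        have hm := mul_le_mul_of_nonneg_left hω hNpos.le
        calc (N:ℝ) * t ≤ (N:ℝ) * (1 / (N:ℝ) * ∑ i, X i ω) := hm
          _ = ∑ i, X i ω := by field_simp
      have hfinal : (N:ℝ) * t ≤ (N:ℝ)*(t/4) + t/4 * (2*(N:ℝ)) := by
        have hm2 := mul_le_mul_of_nonneg_left (le_trans hsum2 hsum3)
          (by linarith : (0:ℝ) ≤ t/4)
        linarith [hNt, hsum1]
      nlinarith [mul_pos hNpos ht]
    -- Step 2: Markov bound for each k
    have hstep2 : ∀ k : ℕ, P (A k)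
        ≤ ENNReal.ofReal (c₁ * 4^k * Real.exp (-((2:ℝ)^((k:ℝ)*α) * u))) := by
      intro k
      have hsk : (0:ℝ) < 2^k * t / 4 := by positivity
      have hkey := markov_count P X hmeas (2^k * t / 4) ((N:ℝ)/4^k) (by positivity)
      have hexp_eq : c₂ * (2^k * t / 4) ^ α = (2:ℝ)^((k:ℝ)*α) * u := by
        have h1 : (2^k * t / 4 : ℝ) = 2^k * (t/4) := by ring
        rw [h1, Real.mul_rpow (by positivity) (by positivity)]
        rw [← Real.rpow_natCast (2:ℝ) k, ← Real.rpow_mul (by norm_num : (0:ℝ) ≤ 2)]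
        rw [hueq]
        ring
      have htail' : ∀ i : Fin N, P {ω | 2^k * t / 4 ≤ X i ω}
          ≤ ENNReal.ofReal (c₁ * Real.exp (-((2:ℝ)^((k:ℝ)*α) * u))) := by
        intro i
        rw [ENNReal.le_ofReal_iff_toReal_le (measure_ne_top P _) (by positivity)]
        rw [← hexp_eq]
        exact htail i _ hsk
      have hsumB : ∑ i : Fin N, P {ω | 2^k * t / 4 ≤ X i ω}
          ≤ ENNReal.ofReal ((N:ℝ) * (c₁ * Real.exp (-((2:ℝ)^((k:ℝ)*α) * u)))) := by
        calc ∑ i : Fin N, P {ω | 2^k * t / 4 ≤ X i ω}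
            ≤ ∑ _i : Fin N, ENNReal.ofReal (c₁ * Real.exp (-((2:ℝ)^((k:ℝ)*α) * u))) :=
              Finset.sum_le_sum fun i _ => htail' i
          _ = (N : ENNReal) * ENNReal.ofReal (c₁ * Real.exp (-((2:ℝ)^((k:ℝ)*α) * u))) := by
              rw [Finset.sum_const, Finset.card_univ, Fintype.card_fin, nsmul_eq_mul]
          _ = ENNReal.ofReal ((N:ℝ) * (c₁ * Real.exp (-((2:ℝ)^((k:ℝ)*α) * u)))) := by
              rw [ENNReal.ofReal_mul (by positivity : (0:ℝ) ≤ (N:ℝ)), ENNReal.ofReal_natCast]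
      calc P (A k) = ENNReal.ofReal ((4:ℝ)^k/(N:ℝ) * ((N:ℝ)/4^k)) * P (A k) := by
            rw [show ((4:ℝ)^k/(N:ℝ)) * ((N:ℝ)/4^k) = 1 by field_simp,
              ENNReal.ofReal_one, one_mul]
        _ = ENNReal.ofReal ((4:ℝ)^k/(N:ℝ)) * (ENNReal.ofReal ((N:ℝ)/4^k) * P (A k)) := by
            rw [ENNReal.ofReal_mul (by positivity), mul_assoc]
        _ ≤ ENNReal.ofReal ((4:ℝ)^k/(N:ℝ))
              * ENNReal.ofReal ((N:ℝ) * (c₁ * Real.exp (-((2:ℝ)^((k:ℝ)*α) * u)))) :=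
            mul_le_mul_right (le_trans hkey hsumB) _
        _ = ENNReal.ofReal ((4:ℝ)^k/(N:ℝ)
              * ((N:ℝ) * (c₁ * Real.exp (-((2:ℝ)^((k:ℝ)*α) * u))))) :=
            (ENNReal.ofReal_mul (by positivity)).symm
        _ = ENNReal.ofReal (c₁ * 4^k * Real.exp (-((2:ℝ)^((k:ℝ)*α) * u))) := by
            congr 1
            field_simp
    -- Step 3: sum the geometric series
    have hterm : ∀ k : ℕ, c₁ * 4^k * Real.exp (-((2:ℝ)^((k:ℝ)*α) * u))
        ≤ (c₁ * Real.exp (-u)) * (1/2)^k := term_bound c₁ α u hc₁ hα hu3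
    have hP : P {ω | t ≤ 1 / (N:ℝ) * ∑ i, X i ω}
        ≤ ENNReal.ofReal (C * Real.exp (-(c * t ^ α))) := by
      calc P {ω | t ≤ 1 / (N:ℝ) * ∑ i, X i ω} ≤ P (⋃ k : ℕ, A k) := measure_mono hincl
        _ ≤ ∑' k : ℕ, P (A k) := measure_iUnion_le _
        _ ≤ ∑' k : ℕ, ENNReal.ofReal ((c₁ * Real.exp (-u)) * (1/2)^k) :=
            ENNReal.tsum_le_tsum fun k =>
              le_trans (hstep2 k) (ENNReal.ofReal_le_ofReal (hterm k))
        _ = ENNReal.ofReal (c₁ * Real.exp (-u)) * ∑' k : ℕ, (ENNReal.ofReal (1/2))^k := by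
            simp_rw [ENNReal.ofReal_mul (by positivity : (0:ℝ) ≤ c₁ * Real.exp (-u)),
              ENNReal.ofReal_pow (by norm_num : (0:ℝ) ≤ 1/2)]
            rw [ENNReal.tsum_mul_left]
        _ = ENNReal.ofReal (c₁ * Real.exp (-u)) * 2 := by
            congr 1
            rw [show ENNReal.ofReal (1/2) = 2⁻¹ by
              rw [show (1/2:ℝ) = (2:ℝ)⁻¹ by norm_num,
                ENNReal.ofReal_inv_of_pos (by norm_num), ENNReal.ofReal_ofNat]]
            rw [ENNReal.tsum_geometric]
            rw [ENNReal.one_sub_inv_two, inv_inv]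
        _ ≤ ENNReal.ofReal (C * Real.exp (-(c * t ^ α))) := by
            rw [show (2:ENNReal) = ENNReal.ofReal 2 from (ENNReal.ofReal_ofNat 2).symm,
              ← ENNReal.ofReal_mul (by positivity)]
            apply ENNReal.ofReal_le_ofReal
            rw [hu_def]
            have h2C : 2 * c₁ ≤ C := by
              have := Real.exp_pos (c * t₀ ^ α)
              rw [hC_def]; linarith
            nlinarith [Real.exp_pos (-(c * t ^ α))]
    exact ENNReal.toReal_le_of_le_ofReal (by positivity) hP


end
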